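/- arXiv:2408.12785 — 5 statements merged into one kernel-verified Lean document; each statement's English description precedes it below -/
import Mathlib

section
/- For every syndetic, idempotent filter 𝔉 on ℕ and every minimal left ideal L of the semigroup (βℕ, +) of ultrafilters on ℕ, there exists an idempotent ultrafilter 𝔭 ∈ L with 𝔉 ⊆ 𝔭 (i.e., every member of 𝔉 belongs to 𝔭). -/
open Set

/-- `A − n` computed inside the positive integers. -/
def shiftN (A : Set ℕ+) (n : ℕ+) : Set ℕ+ := {m : ℕ+ | m + n ∈ A}

/-- `A − B := ⋃_{b ∈ B} (A − b)`. -/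
def shiftSet (A B : Set ℕ+) : Set ℕ+ := ⋃ b ∈ B, shiftN A b

/-- A set of positive integers is syndetic if `A ∪ (A−1) ∪ ⋯ ∪ (A−N) = ℕ` for some `N`. -/
def Syndetic (A : Set ℕ+) : Prop :=
  ∃ N : ℕ+, (A ∪ ⋃ k ∈ {k : ℕ+ | k ≤ N}, shiftN A k) = Set.univ

/-- A set of positive integers is thick if it contains a translate of every finite set. -/
def Thick (A : Set ℕ+) : Prop :=
  ∀ F : Finset ℕ+, ∃ n : ℕ+, ∀ f ∈ F, f + n ∈ A

/-- Piecewise syndetic: some finite union of translates `A ∪ (A−1) ∪ ⋯ ∪ (A−N)` is thick. -/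
def PiecewiseSyndetic (A : Set ℕ+) : Prop :=
  ∃ N : ℕ+, Thick (A ∪ ⋃ k ∈ {k : ℕ+ | k ≤ N}, shiftN A k)

/-- A self-map of a topological space is minimal if every forward orbit
`{T^n x | n ∈ ℕ, n ≥ 1}` is dense. -/
def MinimalMap {X : Type} [TopologicalSpace X] (T : X → X) : Prop :=
  ∀ x : X, Dense (Set.range fun n : ℕ+ => T^[(n : ℕ)] x)

/-- A minimal topological dynamical system: a nonempty compact metric space together with a
continuous map all of whose forward orbits are dense. -/
structure MinSystem : Type 1 where
  X : Type
  [met : MetricSpace X]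
  [cpt : CompactSpace X]
  [nem : Nonempty X]
  T : X → X
  cont : Continuous T
  minimal : MinimalMap T

attribute [instance] MinSystem.met MinSystem.cpt MinSystem.nem

/-- `R(x,U)`: the set of (positive) return times of `x` to `U`. -/
def retTimes {X : Type} (T : X → X) (x : X) (U : Set X) : Set ℕ+ :=
  {n : ℕ+ | T^[(n : ℕ)] x ∈ U}

/-- Dynamically syndetic sets. -/
def DynSyndetic (A : Set ℕ+) : Prop :=
  ∃ (S : MinSystem) (x : S.X) (U : Set S.X),
    IsOpen U ∧ U.Nonempty ∧ retTimes S.T x U ⊆ A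

/-- Dynamically central syndetic sets. -/
def DynCentralSyndetic (A : Set ℕ+) : Prop :=
  ∃ (S : MinSystem) (x : S.X) (U : Set S.X),
    IsOpen U ∧ x ∈ U ∧ retTimes S.T x U ⊆ A

/-- Dynamically thick sets: `{T^n x | n ∈ A}` is dense for every minimal system and point. -/
def DynThick (A : Set ℕ+) : Prop :=
  ∀ (S : MinSystem) (x : S.X), Dense ((fun n : ℕ+ => S.T^[(n : ℕ)] x) '' A)

/-- Sets of (minimal topological) pointwise recurrence. -/
def PointwiseRecurrent (A : Set ℕ+) : Prop :=
  ∀ (S : MinSystem) (x : S.X) (U : Set S.X), IsOpen U → x ∈ U →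
    ∃ a ∈ A, S.T^[(a : ℕ)] x ∈ U

/-- A family: an upward-closed collection of subsets of the positive integers. -/
def UpwardClosed (F : Set (Set ℕ+)) : Prop :=
  ∀ ⦃A B : Set ℕ+⦄, A ∈ F → A ⊆ B → B ∈ F

/-- A filter (in the combinatorial sense): an upward-closed collection closed under
finite intersections. -/
def IsFilterFamily (F : Set (Set ℕ+)) : Prop :=
  UpwardClosed F ∧ ∀ ⦃A B : Set ℕ+⦄, A ∈ F → B ∈ F → A ∩ B ∈ F

/-- A family all of whose members are syndetic. -/
def SyndeticFamily (F : Set (Set ℕ+)) : Prop := ∀ A ∈ F, Syndetic A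

/-- `A − 𝔉 := {n | A − n ∈ 𝔉}`. -/
def famShift (A : Set ℕ+) (F : Set (Set ℕ+)) : Set ℕ+ := {n : ℕ+ | shiftN A n ∈ F}

/-- `𝔉 + 𝔊 := {A | A − 𝔊 ∈ 𝔉}`. -/
def famSum (F G : Set (Set ℕ+)) : Set (Set ℕ+) := {A : Set ℕ+ | famShift A G ∈ F}

/-- A family is idempotent if `𝔉 ⊆ 𝔉 + 𝔉`. -/
def IdempotentFamily (F : Set (Set ℕ+)) : Prop := F ⊆ famSum F F

/-- A proper family: nonempty and not containing the empty set. -/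
def ProperFamily (F : Set (Set ℕ+)) : Prop := F.Nonempty ∧ ∅ ∉ F

/-- An ultrafilter on `ℕ`, viewed combinatorially: a proper filter of subsets such that for
every set either it or its complement is a member. -/
def IsUltra (p : Set (Set ℕ+)) : Prop :=
  IsFilterFamily p ∧ p.Nonempty ∧ ∅ ∉ p ∧ ∀ S : Set ℕ+, S ∈ p ∨ Sᶜ ∈ p

/-- A left ideal of the semigroup `(βℕ, +)`: a nonempty set `L` of ultrafilters with
`𝔮 + 𝔭 ∈ L` for every ultrafilter `𝔮` and every `𝔭 ∈ L`. -/
def IsLeftIdeal (L : Set (Set (Set ℕ+))) : Prop :=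
  (∀ p ∈ L, IsUltra p) ∧ L.Nonempty ∧
    ∀ q : Set (Set ℕ+), IsUltra q → ∀ p ∈ L, famSum q p ∈ L

/-- A minimal left ideal: a left ideal minimal under inclusion. -/
def IsMinimalLeftIdeal (L : Set (Set (Set ℕ+))) : Prop :=
  IsLeftIdeal L ∧ ∀ L' : Set (Set (Set ℕ+)), IsLeftIdeal L' → L' ⊆ L → L' = L

/-- A set is central if it belongs to an idempotent ultrafilter lying in a minimal left
ideal of `βℕ`. -/
def Central (A : Set ℕ+) : Prop :=
  ∃ p : Set (Set ℕ+), IsUltra p ∧ famSum p p = p ∧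
    (∃ L : Set (Set (Set ℕ+)), IsMinimalLeftIdeal L ∧ p ∈ L) ∧ A ∈ p


/-! ### Auxiliary material for the main theorem -/

attribute [local instance] Ultrafilter.add Ultrafilter.addSemigroup

namespace SyndeticAux

/-- The set-of-sets of an ultrafilter. -/
def e (U : Ultrafilter ℕ+) : Set (Set ℕ+) := {A | A ∈ U}

lemma mem_e {U : Ultrafilter ℕ+} {A : Set ℕ+} : A ∈ e U ↔ A ∈ U := Iff.rfl

lemma e_inj : Function.Injective e := by
  intro U V h
  ext A
  exact (Set.ext_iff.mp h A)

lemma e_ultra (U : Ultrafilter ℕ+) : IsUltra (e U) := by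
  refine ⟨⟨fun A B hA hAB => Filter.mem_of_superset hA hAB,
      fun A B hA hB => Filter.inter_mem hA hB⟩,
    ⟨Set.univ, Filter.univ_mem⟩, Ultrafilter.empty_notMem (f := U),
    fun S => Ultrafilter.mem_or_compl_mem U S⟩

lemma exists_e {p : Set (Set ℕ+)} (hp : IsUltra p) : ∃ U : Ultrafilter ℕ+, e U = p := by
  obtain ⟨⟨hup, hint⟩, ⟨A0, hA0⟩, hempty, hdich⟩ := hp
  have huniv : Set.univ ∈ p := hup hA0 (Set.subset_univ _)
  let f : Filter ℕ+ :=
    { sets := p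
      univ_sets := huniv
      sets_of_superset := fun h1 h2 => hup h1 h2
      inter_sets := fun h1 h2 => hint h1 h2 }
  have hmem : ∀ s : Set ℕ+, s ∈ f ↔ s ∈ p := fun _ => Iff.rfl
  have h : ∀ s : Set ℕ+, sᶜ ∉ f ↔ s ∈ f := by
    intro s
    constructor
    · intro hs
      rcases hdich s with h' | h'
      · exact h'
      · exact absurd h' hs
    · intro hs hsc
      have : s ∩ sᶜ ∈ p := hint hs hsc
      rw [Set.inter_compl_self] at this
      exact hempty this
  exact ⟨Ultrafilter.ofComplNotMemIff f h, rfl⟩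

lemma famSum_e (U V : Ultrafilter ℕ+) : famSum (e U) (e V) = e (U + V) := by
  ext A
  have h1 : A ∈ e (U + V) ↔ ∀ᶠ m in (U : Filter ℕ+), ∀ᶠ n in (V : Filter ℕ+), m + n ∈ A :=
    Ultrafilter.eventually_add U V (· ∈ A)
  rw [h1]
  have hset : {n : ℕ+ | shiftN A n ∈ e V} = {m : ℕ+ | ∀ᶠ n in (V : Filter ℕ+), m + n ∈ A} := by
    ext m
    show ({k : ℕ+ | k + m ∈ A} ∈ V) ↔ ({n : ℕ+ | m + n ∈ A} ∈ (V : Filter ℕ+))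
    rw [show {k : ℕ+ | k + m ∈ A} = {n : ℕ+ | m + n ∈ A} from by ext n; simp [add_comm],
      Ultrafilter.mem_coe]
  show ({n : ℕ+ | shiftN A n ∈ e V} ∈ (U : Filter ℕ+)) ↔ _
  rw [hset]
  rfl

/-- Syndetic sets belong to some ultrafilter in any left ideal. -/
lemma syndetic_mem {L : Set (Set (Set ℕ+))} (hL : IsLeftIdeal L) {A : Set ℕ+}
    (hA : Syndetic A) {U : Ultrafilter ℕ+} (hU : e U ∈ L) :
    ∃ V : Ultrafilter ℕ+, e V ∈ L ∧ A ∈ V := by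
  obtain ⟨N, hN⟩ := hA
  have hfin : ({k : ℕ+ | k ≤ N}).Finite := Set.finite_Iic N
  have hmem : (A ∪ ⋃ k ∈ {k : ℕ+ | k ≤ N}, shiftN A k) ∈ U := by
    rw [hN]; exact Filter.univ_mem
  rcases (Ultrafilter.union_mem_iff.mp hmem) with h | h
  · exact ⟨U, hU, h⟩
  · obtain ⟨k, -, hk⟩ := (Ultrafilter.finite_biUnion_mem_iff hfin).mp h
    refine ⟨pure k + U, ?_, ?_⟩
    · have := hL.2.2 (e (pure k)) (e_ultra _) (e U) hU
      rwa [famSum_e] at this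
    · have hiff : (A ∈ (pure k + U : Ultrafilter ℕ+)) ↔
          ∀ᶠ m in ((pure k : Ultrafilter ℕ+) : Filter ℕ+), ∀ᶠ n in (U : Filter ℕ+), m + n ∈ A :=
        Ultrafilter.eventually_add _ _ (· ∈ A)
      rw [hiff, Ultrafilter.coe_pure, Filter.eventually_pure]
      show {n : ℕ+ | k + n ∈ A} ∈ (U : Filter ℕ+)
      rw [show {n : ℕ+ | k + n ∈ A} = shiftN A k from by ext n; simp [shiftN, add_comm]]
      exact hk

end SyndeticAux

open SyndeticAux in
/-- For every syndetic, idempotent filter `𝔉` and every minimal left ideal `L` of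
`(βℕ, +)`, there is an idempotent ultrafilter `𝔭 ∈ L` containing `𝔉`. -/
theorem syndetic_idempotent_filter_contained_in_minimal_idempotent
    (𝓕 : Set (Set ℕ+)) (hFil : IsFilterFamily 𝓕) (hSyn : SyndeticFamily 𝓕)
    (hIdem : IdempotentFamily 𝓕)
    (L : Set (Set (Set ℕ+))) (hL : IsMinimalLeftIdeal L) :
    ∃ p ∈ L, IsUltra p ∧ famSum p p = p ∧ 𝓕 ⊆ p := by
  classical
  have hLI := hL.1
  obtain ⟨p0, hp0⟩ := hLI.2.1
  obtain ⟨V0, hV0⟩ := exists_e (hLI.1 p0 hp0)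
  rw [← hV0] at hp0
  clear hV0
  -- `L` is the image under `e` of the compact set `R = range (· + V0)`
  have hRL : ∀ W : Ultrafilter ℕ+, e (W + V0) ∈ L := by
    intro W
    have := hLI.2.2 (e W) (e_ultra W) (e V0) hp0
    rwa [famSum_e] at this
  set R : Set (Ultrafilter ℕ+) := Set.range (· + V0) with hRdef
  have hRideal : IsLeftIdeal (e '' R) := by
    refine ⟨?_, ⟨e (V0 + V0), ⟨V0 + V0, ⟨V0, rfl⟩, rfl⟩⟩, ?_⟩
    · rintro p ⟨U, -, rfl⟩; exact e_ultra U
    · rintro q hq p ⟨U, ⟨W, rfl⟩, rfl⟩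
      obtain ⟨Q, rfl⟩ := exists_e hq
      rw [famSum_e]
      exact ⟨Q + (W + V0), ⟨Q + W, add_assoc Q W V0⟩, rfl⟩
  have hLeq : e '' R = L := by
    refine hL.2 _ hRideal ?_
    rintro p ⟨U, ⟨W, rfl⟩, rfl⟩
    exact hRL W
  have hRmem : ∀ U : Ultrafilter ℕ+, e U ∈ L ↔ U ∈ R := by
    intro U
    constructor
    · intro h
      rw [← hLeq] at h
      obtain ⟨W, hW, hWe⟩ := h
      rwa [← e_inj hWe]
    · rintro ⟨W, rfl⟩
      exact hRL W
  have hRcomp : IsCompact R := isCompact_range (Ultrafilter.continuous_add_left V0)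
  have hRclosed : IsClosed {U : Ultrafilter ℕ+ | e U ∈ L} := by
    have : {U : Ultrafilter ℕ+ | e U ∈ L} = R := Set.ext hRmem
    rw [this]
    exact hRcomp.isClosed
  -- the candidate compact subsemigroup
  set 𝓢 : Set (Ultrafilter ℕ+) := {U : Ultrafilter ℕ+ | e U ∈ L ∧ ∀ A ∈ 𝓕, A ∈ U} with h𝓢def
  have h𝓢eq : 𝓢 = {U : Ultrafilter ℕ+ | e U ∈ L} ∩
      ⋂ A ∈ 𝓕, {U : Ultrafilter ℕ+ | A ∈ U} := by
    ext U
    simp only [h𝓢def, Set.mem_setOf_eq, Set.mem_inter_iff, Set.mem_iInter]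
  have h𝓢closed : IsClosed 𝓢 := by
    rw [h𝓢eq]
    exact hRclosed.inter (isClosed_biInter fun A _ => ultrafilter_isClosed_basic A)
  have h𝓢comp : IsCompact 𝓢 := h𝓢closed.isCompact
  -- nonemptiness of 𝓢, via compactness and syndeticity
  have h𝓢ne : 𝓢.Nonempty := by
    have huniv_synd : ∀ A ∈ insert Set.univ 𝓕, Syndetic A := by
      rintro A hA
      rcases Set.mem_insert_iff.mp hA with rfl | h
      · exact ⟨1, by rw [Set.univ_union]⟩
      · exact hSyn A h
    let ι := {A : Set ℕ+ // A ∈ insert Set.univ 𝓕}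
    haveI : Nonempty ι := ⟨⟨Set.univ, Set.mem_insert _ _⟩⟩
    let Z : ι → Set (Ultrafilter ℕ+) := fun A => {U : Ultrafilter ℕ+ | e U ∈ L ∧ A.1 ∈ U}
    have hZdir : Directed (· ⊇ ·) Z := by
      rintro ⟨A, hA⟩ ⟨B, hB⟩
      rcases Set.mem_insert_iff.mp hA with rfl | hA'
      · exact ⟨⟨B, hB⟩, fun U hU => ⟨hU.1, Filter.univ_mem⟩, fun U hU => hU⟩
      rcases Set.mem_insert_iff.mp hB with rfl | hB'
      · exact ⟨⟨A, hA⟩, fun U hU => hU, fun U hU => ⟨hU.1, Filter.univ_mem⟩⟩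
      refine ⟨⟨A ∩ B, Set.mem_insert_iff.mpr (Or.inr (hFil.2 hA' hB'))⟩, ?_, ?_⟩
      · intro U hU
        exact ⟨hU.1, Filter.mem_of_superset hU.2 Set.inter_subset_left⟩
      · intro U hU
        exact ⟨hU.1, Filter.mem_of_superset hU.2 Set.inter_subset_right⟩
    have hZne : ∀ A : ι, (Z A).Nonempty := by
      intro A
      obtain ⟨V, hVL, hVA⟩ := syndetic_mem hLI (huniv_synd A.1 A.2) hp0
      exact ⟨V, hVL, hVA⟩
    have hZclosed : ∀ A : ι, IsClosed (Z A) := by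
      intro A
      exact hRclosed.inter (ultrafilter_isClosed_basic A.1)
    have hZcomp : ∀ A : ι, IsCompact (Z A) := fun A => (hZclosed A).isCompact
    obtain ⟨U0, hU0⟩ :=
      IsCompact.nonempty_iInter_of_directed_nonempty_isCompact_isClosed Z hZdir hZne hZcomp
        hZclosed
    refine ⟨U0, (Set.mem_iInter.mp hU0 ⟨Set.univ, Set.mem_insert _ _⟩).1, ?_⟩
    intro A hA
    exact (Set.mem_iInter.mp hU0 ⟨A, Set.mem_insert_iff.mpr (Or.inr hA)⟩).2
  -- 𝓢 is a subsemigroup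
  have h𝓢add : ∀ x ∈ 𝓢, ∀ y ∈ 𝓢, x + y ∈ 𝓢 := by
    rintro U ⟨hUL, hUF⟩ V ⟨hVL, hVF⟩
    constructor
    · have := hLI.2.2 (e U) (e_ultra U) (e V) hVL
      rwa [famSum_e] at this
    · intro A hA
      have h1 : famShift A 𝓕 ∈ 𝓕 := hIdem hA
      have h2 : {n : ℕ+ | shiftN A n ∈ 𝓕} ∈ U := hUF _ h1
      have hiff : (A ∈ U + V) ↔
          ∀ᶠ m in (U : Filter ℕ+), ∀ᶠ n in (V : Filter ℕ+), m + n ∈ A :=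
        Ultrafilter.eventually_add _ _ (· ∈ A)
      rw [hiff]
      show {m : ℕ+ | ∀ᶠ n in (V : Filter ℕ+), m + n ∈ A} ∈ (U : Filter ℕ+)
      refine Filter.mem_of_superset h2 ?_
      intro m hm
      have hmV : shiftN A m ∈ V := hVF _ hm
      show {n : ℕ+ | m + n ∈ A} ∈ (V : Filter ℕ+)
      have : {n : ℕ+ | m + n ∈ A} = shiftN A m := by
        ext n; simp [shiftN, add_comm]
      rw [this]
      exact hmV
  obtain ⟨m, hmS, hm⟩ :=
    exists_idempotent_in_compact_add_subsemigroup
      (fun r => Ultrafilter.continuous_add_left r) 𝓢 h𝓢ne h𝓢comp h𝓢add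
  refine ⟨e m, hmS.1, e_ultra m, ?_, fun A hA => hmS.2 A hA⟩
  rw [famSum_e, hm]
end

section
/- Let A ⊆ ℕ belong to a syndetic, idempotent filter. Then for every minimal left ideal L of the semigroup (βℕ, +) there exists an idempotent ultrafilter 𝔭 ∈ L with A ∈ 𝔭. In particular, for every thick set H ⊆ ℕ, the set A ∩ H is central. -/
open Set

section Aux

open Filter

attribute [local instance] Ultrafilter.add Ultrafilter.addSemigroup

/-- The combinatorial family of sets of an ultrafilter. -/
private def sOf (U : Ultrafilter ℕ+) : Set (Set ℕ+) := {s | s ∈ U}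

private lemma mem_sOf {U : Ultrafilter ℕ+} {s : Set ℕ+} : s ∈ sOf U ↔ s ∈ U := Iff.rfl

private lemma sOf_injective : Function.Injective sOf := by
  intro U V h
  exact Ultrafilter.coe_injective <| Filter.ext fun s => Set.ext_iff.mp h s

private lemma isUltra_sOf (U : Ultrafilter ℕ+) : IsUltra (sOf U) := by
  refine ⟨⟨fun A B hA hAB => Filter.mem_of_superset hA hAB,
    fun A B hA hB => Filter.inter_mem hA hB⟩,
    ⟨Set.univ, Filter.univ_mem⟩, Filter.empty_notMem _, fun S => ?_⟩
  exact (Ultrafilter.mem_or_compl_mem U S)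

private lemma exists_sOf {p : Set (Set ℕ+)} (hp : IsUltra p) : ∃ U : Ultrafilter ℕ+, sOf U = p := by
  obtain ⟨⟨hup, hinter⟩, hne, hemp, htot⟩ := hp
  have huniv : Set.univ ∈ p := by
    obtain ⟨s, hs⟩ := hne; exact hup hs (Set.subset_univ s)
  refine ⟨Ultrafilter.ofComplNotMemIff ⟨p, huniv, fun h hsub => hup h hsub,
    fun h1 h2 => hinter h1 h2⟩ fun s => ?_, rfl⟩
  constructor
  · intro hc
    rcases htot s with h | h
    · exact h
    · exact absurd h hc
  · intro hs hc
    have : s ∩ sᶜ ∈ p := hinter hs hc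
    rw [Set.inter_compl_self] at this
    exact hemp this

private lemma famSum_sOf (q p : Ultrafilter ℕ+) :
    famSum (sOf q) (sOf p) = sOf (q + p) := by
  ext A
  have h1 : A ∈ famSum (sOf q) (sOf p) ↔ ∀ᶠ n in (q : Filter ℕ+), ∀ᶠ m in (p : Filter ℕ+), m + n ∈ A :=
    Iff.rfl
  have h2 : A ∈ sOf (q + p) ↔ ∀ᶠ n in (q : Filter ℕ+), ∀ᶠ m in (p : Filter ℕ+), n + m ∈ A :=
    Ultrafilter.eventually_add q p (· ∈ A)
  rw [h1, h2]
  exact eventually_congr (Eventually.of_forall fun n =>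
    eventually_congr (Eventually.of_forall fun m => by rw [add_comm]))

private lemma mem_add_iff (U V : Ultrafilter ℕ+) (s : Set ℕ+) :
    s ∈ U + V ↔ ∀ᶠ m in (U : Filter ℕ+), ∀ᶠ n in (V : Filter ℕ+), m + n ∈ s :=
  (Ultrafilter.eventually_add U V (· ∈ s)).symm.trans Iff.rfl |>.symm.trans Iff.rfl

private lemma finInter_mem {𝓕 : Set (Set ℕ+)} (hF : IsFilterFamily 𝓕) (huniv : Set.univ ∈ 𝓕)
    (t : Finset {s // s ∈ 𝓕}) : (⋂ i ∈ t, (i : Set ℕ+)) ∈ 𝓕 := by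
  classical
  induction t using Finset.induction with
  | empty => simpa using huniv
  | @insert a t _ ih =>
    rw [Finset.set_biInter_insert]
    exact hF.2 a.2 ih

private lemma key_lemma (A : Set ℕ+) (𝓕 : Set (Set ℕ+))
    (hF : IsFilterFamily 𝓕) (hSyn : SyndeticFamily 𝓕) (hId : IdempotentFamily 𝓕) (hA : A ∈ 𝓕)
    (L : Set (Set (Set ℕ+))) (hL : IsMinimalLeftIdeal L) :
    ∃ p ∈ L, IsUltra p ∧ famSum p p = p ∧ A ∈ p := by
  classical
  obtain ⟨⟨hLultra, hLne, hLadd⟩, hLmin⟩ := hL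
  have huniv : Set.univ ∈ 𝓕 := hF.1 hA (Set.subset_univ A)
  -- transfer L to the ultrafilter space
  set L' : Set (Ultrafilter ℕ+) := {U | sOf U ∈ L} with hL'def
  obtain ⟨p₀, hp₀⟩ := hLne
  obtain ⟨U₀, hU₀⟩ := exists_sOf (hLultra p₀ hp₀)
  have hU₀L : U₀ ∈ L' := by rw [Set.mem_setOf_eq, hU₀]; exact hp₀
  have hL'add : ∀ (V : Ultrafilter ℕ+), ∀ U ∈ L', V + U ∈ L' := by
    intro V U hU
    show sOf (V + U) ∈ L
    rw [← famSum_sOf]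
    exact hLadd _ (isUltra_sOf V) _ hU
  -- L' is the range of right translation by U₀, hence closed
  have hrange : L' = Set.range (· + U₀) := by
    apply Set.Subset.antisymm
    · have hsub : sOf '' Set.range (· + U₀) ⊆ L := by
        rintro _ ⟨_, ⟨V, rfl⟩, rfl⟩
        exact hL'add V U₀ hU₀L
      have hli : IsLeftIdeal (sOf '' Set.range (· + U₀)) := by
        refine ⟨?_, ⟨sOf (U₀ + U₀), ⟨_, ⟨U₀, rfl⟩, rfl⟩⟩, ?_⟩
        · rintro _ ⟨_, _, rfl⟩; exact isUltra_sOf _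
        · rintro q hq _ ⟨_, ⟨V, rfl⟩, rfl⟩
          obtain ⟨Q, rfl⟩ := exists_sOf hq
          rw [famSum_sOf]
          exact ⟨Q + V + U₀, ⟨Q + V, rfl⟩, by rw [add_assoc]⟩
      have heq := hLmin _ hli hsub
      intro U hU
      have : sOf U ∈ sOf '' Set.range (· + U₀) := heq ▸ hU
      obtain ⟨W, hW, hWe⟩ := this
      exact (sOf_injective hWe) ▸ hW
    · rintro _ ⟨V, rfl⟩
      exact hL'add V U₀ hU₀L
  have hL'closed : IsClosed L' := by
    rw [hrange, ← Set.image_univ]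
    exact (isCompact_univ.image (Ultrafilter.continuous_add_left U₀)).isClosed
  -- every member of 𝓕 is contained in some member of L'
  have hmeet : ∀ s ∈ 𝓕, ∃ U ∈ L', s ∈ U := by
    intro s hs
    obtain ⟨N, hN⟩ := hSyn s hs
    have huniv' : (s ∪ ⋃ k ∈ {k : ℕ+ | k ≤ N}, shiftN s k) ∈ U₀ := by
      rw [hN]; exact Filter.univ_mem
    rcases Ultrafilter.union_mem_iff.mp huniv' with hcase | hcase
    · exact ⟨U₀, hU₀L, hcase⟩
    · have hfin : ({k : ℕ+ | k ≤ N}).Finite := Set.finite_Iic N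
      obtain ⟨k, -, hk⟩ := (Ultrafilter.finite_biUnion_mem_iff hfin).mp hcase
      refine ⟨(pure k : Ultrafilter ℕ+) + U₀, hL'add _ _ hU₀L, ?_⟩
      rw [mem_add_iff]
      rw [Ultrafilter.coe_pure, Filter.eventually_pure]
      filter_upwards [hk] with n hn
      rw [add_comm]
      exact hn
  -- the closure of 𝓕 meets L'
  have hCL : (L' ∩ ⋂ i : {s // s ∈ 𝓕}, {U : Ultrafilter ℕ+ | (i : Set ℕ+) ∈ U}).Nonempty := by
    apply (hL'closed.isCompact).inter_iInter_nonempty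
    · intro i; exact ultrafilter_isClosed_basic _
    · intro t
      obtain ⟨U, hUL, hUs⟩ := hmeet _ (finInter_mem hF huniv t)
      refine ⟨U, hUL, Set.mem_iInter₂.mpr fun i hi => ?_⟩
      exact Filter.mem_of_superset hUs (Set.biInter_subset_of_mem hi)
  set S : Set (Ultrafilter ℕ+) :=
    L' ∩ ⋂ i : {s // s ∈ 𝓕}, {U : Ultrafilter ℕ+ | (i : Set ℕ+) ∈ U} with hSdef
  have hSC : ∀ U ∈ S, ∀ s ∈ 𝓕, s ∈ U := by
    intro U hU s hs
    exact Set.mem_iInter.mp hU.2 ⟨s, hs⟩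
  have hSclosed : IsClosed S :=
    hL'closed.inter (isClosed_iInter fun i => ultrafilter_isClosed_basic _)
  have hSadd : ∀ U ∈ S, ∀ V ∈ S, U + V ∈ S := by
    intro U hU V hV
    refine ⟨hL'add U V hV.1, Set.mem_iInter.mpr fun i => ?_⟩
    have hsF : (i : Set ℕ+) ∈ famSum 𝓕 𝓕 := hId i.2
    have h1 : famShift (i : Set ℕ+) 𝓕 ∈ 𝓕 := hsF
    have h2 : famShift (i : Set ℕ+) 𝓕 ⊆ {n : ℕ+ | shiftN (i : Set ℕ+) n ∈ sOf V} := by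
      intro n hn
      exact hSC V hV _ hn
    have h3 : {n : ℕ+ | shiftN (i : Set ℕ+) n ∈ sOf V} ∈ U :=
      Filter.mem_of_superset (hSC U hU _ h1) h2
    have : (i : Set ℕ+) ∈ famSum (sOf U) (sOf V) := h3
    rw [famSum_sOf] at this
    exact this
  obtain ⟨W, hWS, hWidem⟩ :=
    exists_idempotent_in_compact_add_subsemigroup Ultrafilter.continuous_add_left S
      hCL hSclosed.isCompact hSadd
  refine ⟨sOf W, hWS.1, isUltra_sOf W, ?_, hSC W hWS A hA⟩
  rw [famSum_sOf, hWidem]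

private lemma thick_ultrafilter {H : Set ℕ+} (hH : Thick H) :
    ∃ P : Ultrafilter ℕ+, ∀ n : ℕ+, shiftN H n ∈ P := by
  classical
  have hne : Filter.NeBot (Filter.generate (Set.range fun n : ℕ+ => shiftN H n)) := by
    rw [Filter.generate_neBot_iff]
    intro t hts htfin
    have hch : ∀ u ∈ t, ∃ n : ℕ+, u = shiftN H n := by
      intro u hu
      rcases hts hu with ⟨n, rfl⟩
      exact ⟨n, rfl⟩
    choose g hg using hch
    set F : Finset ℕ+ :=
      htfin.toFinset.attach.image
        (fun u => g u.1 (htfin.mem_toFinset.mp u.2)) with hFdef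
    obtain ⟨m, hm⟩ := hH F
    refine ⟨m, Set.mem_sInter.mpr fun u hu => ?_⟩
    have hmem : g u hu ∈ F := by
      rw [hFdef]
      exact Finset.mem_image.mpr ⟨⟨u, htfin.mem_toFinset.mpr hu⟩, Finset.mem_attach _ _, rfl⟩
    have := hm _ hmem
    rw [hg u hu]
    show m + g u hu ∈ H
    rwa [add_comm]
  obtain ⟨P, hP⟩ := Ultrafilter.exists_le (Filter.generate (Set.range fun n : ℕ+ => shiftN H n))
  exact ⟨P, fun n => hP (Filter.mem_generate_of_mem (Set.mem_range_self n))⟩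

private lemma exists_minLeftIdeal_in (P : Ultrafilter ℕ+) :
    ∃ L : Set (Set (Set ℕ+)), IsMinimalLeftIdeal L ∧
      ∀ p ∈ L, ∃ U : Ultrafilter ℕ+, sOf U = p ∧ U ∈ Set.range (· + P) := by
  classical
  set S : Set (Set (Ultrafilter ℕ+)) :=
    {J | J.Nonempty ∧ IsClosed J ∧ (∀ (V : Ultrafilter ℕ+), ∀ U ∈ J, V + U ∈ J) ∧
      J ⊆ Set.range (· + P)} with hSdef
  have hrange_closed : ∀ U₀ : Ultrafilter ℕ+, IsClosed (Set.range (· + U₀)) := by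
    intro U₀
    rw [← Set.image_univ]
    exact (isCompact_univ.image (Ultrafilter.continuous_add_left U₀)).isClosed
  have hx₀ : Set.range (· + P) ∈ S := by
    refine ⟨⟨(pure 1 : Ultrafilter ℕ+) + P, ⟨_, rfl⟩⟩, hrange_closed P, ?_, Set.Subset.rfl⟩
    rintro V _ ⟨W, rfl⟩
    exact ⟨V + W, add_assoc V W P⟩
  have hzorn : ∀ c ⊆ S, IsChain (· ⊆ ·) c → c.Nonempty →
      ∃ lb ∈ S, ∀ s ∈ c, lb ⊆ s := by
    intro c hcS hc hcne
    refine ⟨⋂₀ c, ⟨?_, ?_, ?_, ?_⟩, fun s hs => Set.sInter_subset_of_mem hs⟩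
    · haveI : Nonempty c := hcne.to_subtype
      rw [Set.sInter_eq_iInter]
      apply IsCompact.nonempty_iInter_of_directed_nonempty_isCompact_isClosed
      · intro i j
        rcases hc.total i.2 j.2 with h | h
        · exact ⟨i, Set.Subset.rfl, h⟩
        · exact ⟨j, h, Set.Subset.rfl⟩
      · exact fun i => (hcS i.2).1
      · exact fun i => (hcS i.2).2.1.isCompact
      · exact fun i => (hcS i.2).2.1
    · exact isClosed_sInter fun s hs => (hcS hs).2.1
    · intro V U hU
      exact Set.mem_sInter.mpr fun s hs => (hcS hs).2.2.1 V U (Set.mem_sInter.mp hU s hs)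
    · obtain ⟨s, hs⟩ := hcne
      exact (Set.sInter_subset_of_mem hs).trans (hcS hs).2.2.2
  obtain ⟨m, -, hmS, hmmin⟩ := zorn_superset_nonempty S hzorn _ hx₀
  obtain ⟨hmne, hmclosed, hmadd, hmrange⟩ := hmS
  refine ⟨sOf '' m, ⟨⟨?_, ?_, ?_⟩, ?_⟩, ?_⟩
  · rintro _ ⟨U, -, rfl⟩
    exact isUltra_sOf U
  · obtain ⟨U, hU⟩ := hmne
    exact ⟨sOf U, U, hU, rfl⟩
  · rintro q hq _ ⟨U, hU, rfl⟩
    obtain ⟨Q, rfl⟩ := exists_sOf hq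
    rw [famSum_sOf]
    exact ⟨Q + U, hmadd Q U hU, rfl⟩
  · -- minimality
    rintro L₂ ⟨hL₂ultra, hL₂ne, hL₂add⟩ hL₂sub
    obtain ⟨p₂, hp₂⟩ := hL₂ne
    obtain ⟨U, hUm, hUp⟩ := hL₂sub hp₂
    have hJ₂S : Set.range (· + U) ∈ S := by
      refine ⟨⟨(pure 1 : Ultrafilter ℕ+) + U, ⟨_, rfl⟩⟩, hrange_closed U, ?_, ?_⟩
      · rintro V _ ⟨W, rfl⟩
        exact ⟨V + W, add_assoc V W U⟩
      · rintro _ ⟨V, rfl⟩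
        obtain ⟨W, rfl⟩ := hmrange hUm
        exact ⟨V + W, add_assoc V W P⟩
    have hJ₂sub : Set.range (· + U) ⊆ m := by
      rintro _ ⟨V, rfl⟩
      exact hmadd V U hUm
    have hJ₂eq : Set.range (· + U) = m := Set.Subset.antisymm hJ₂sub (hmmin hJ₂S hJ₂sub)
    apply Set.Subset.antisymm hL₂sub
    rintro _ ⟨W, hWm, rfl⟩
    rw [← hJ₂eq] at hWm
    obtain ⟨V, rfl⟩ := hWm
    rw [← famSum_sOf, hUp]
    exact hL₂add _ (isUltra_sOf V) _ hp₂
  · rintro _ ⟨U, hU, rfl⟩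
    exact ⟨U, rfl, hmrange hU⟩


/-- If `A` belongs to a syndetic, idempotent filter, then every minimal left ideal of
`(βℕ, +)` contains an idempotent ultrafilter to which `A` belongs; in particular, for every
thick set `H`, the set `A ∩ H` is central. -/
theorem member_syndetic_idempotent_filter_strongly_central
    (A : Set ℕ+)
    (h : ∃ 𝓕 : Set (Set ℕ+),
      IsFilterFamily 𝓕 ∧ SyndeticFamily 𝓕 ∧ IdempotentFamily 𝓕 ∧ A ∈ 𝓕) :
    (∀ L : Set (Set (Set ℕ+)), IsMinimalLeftIdeal L →
      ∃ p ∈ L, IsUltra p ∧ famSum p p = p ∧ A ∈ p) ∧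
    (∀ H : Set ℕ+, Thick H → Central (A ∩ H)) := by
  obtain ⟨𝓕, hF, hSyn, hId, hA⟩ := h
  refine ⟨fun L hL => key_lemma A 𝓕 hF hSyn hId hA L hL, fun H hH => ?_⟩
  obtain ⟨P, hP⟩ := thick_ultrafilter hH
  obtain ⟨L, hLmin, hLprop⟩ := exists_minLeftIdeal_in P
  obtain ⟨p, hpL, hpu, hpidem, hpA⟩ := key_lemma A 𝓕 hF hSyn hId hA L hLmin
  obtain ⟨U, rfl, Q, rfl⟩ := hLprop p hpL
  have hH' : H ∈ sOf (Q + P) := by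
    rw [mem_sOf, mem_add_iff]
    refine Filter.Eventually.of_forall fun m => ?_
    filter_upwards [hP m] with n hn
    rw [add_comm]
    exact hn
  have hfin : A ∩ H ∈ (Q + P : Ultrafilter ℕ+) :=
    Filter.inter_mem (mem_sOf.mp hpA) (mem_sOf.mp hH')
  exact ⟨sOf (Q + P), isUltra_sOf _, hpidem, ⟨L, hLmin, hpL⟩, mem_sOf.mpr hfin⟩

end Aux
end

section
/- A set A ⊆ ℕ is an IP set if and only if A is a member of a proper, idempotent filter on ℕ. -/
open Set

/-- An IP set: a set containing all finite sums (over nonempty finite index sets) of some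
sequence of positive integers. -/
def IsIP (A : Set ℕ+) : Prop :=
  ∃ x : ℕ → ℕ+, ∀ F : Finset ℕ, F.Nonempty →
    ∃ a ∈ A, (a : ℕ) = ∑ i ∈ F, ((x i : ℕ))


private lemma galvin_step {F : Set (Set ℕ+)} (hFil : IsFilterFamily F)
    (hProp : ProperFamily F) (hIdem : IdempotentFamily F) (B : {S : Set ℕ+ // S ∈ F}) :
    ∃ (n : ℕ+) (B' : Set ℕ+), n ∈ B.1 ∧ B' ∈ F ∧ B' ⊆ B.1 ∧ ∀ m ∈ B', m + n ∈ B.1 := by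
  obtain ⟨B, hB⟩ := B
  have h1 : famShift B F ∈ F := hIdem hB
  have h2 : B ∩ famShift B F ∈ F := hFil.2 hB h1
  have hne : (B ∩ famShift B F).Nonempty := by
    rcases Set.eq_empty_or_nonempty (B ∩ famShift B F) with h | h
    · exact absurd (h ▸ h2) hProp.2
    · exact h
  obtain ⟨n, hnB, hnS⟩ := hne
  exact ⟨n, B ∩ shiftN B n, hnB, hFil.2 hB hnS, Set.inter_subset_left, fun m hm => hm.2⟩

/-- A set `A ⊆ ℕ` is an IP set if and only if it is a member of a proper, idempotent
filter on `ℕ`. -/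
theorem isIP_iff_mem_proper_idempotent_filter (A : Set ℕ+) :
    IsIP A ↔
      ∃ 𝓕 : Set (Set ℕ+),
        IsFilterFamily 𝓕 ∧ ProperFamily 𝓕 ∧ IdempotentFamily 𝓕 ∧ A ∈ 𝓕 := by
  constructor
  · -- forward: IP set yields a proper idempotent filter
    rintro ⟨x, hx⟩
    set FS : ℕ → Set ℕ+ := fun m =>
      {a : ℕ+ | ∃ F : Finset ℕ, F.Nonempty ∧ (∀ i ∈ F, m ≤ i) ∧ (a : ℕ) = ∑ i ∈ F, (x i : ℕ)}
      with hFS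
    have FS_antitone : ∀ {m m' : ℕ}, m ≤ m' → FS m' ⊆ FS m := by
      rintro m m' hmm a ⟨F, hFne, hFlb, hFs⟩
      exact ⟨F, hFne, fun i hi => le_trans hmm (hFlb i hi), hFs⟩
    have xmem : ∀ m : ℕ, x m ∈ FS m := by
      intro m
      exact ⟨{m}, Finset.singleton_nonempty m, by simp, by simp⟩
    refine ⟨{B | ∃ m : ℕ, FS m ⊆ B}, ⟨?_, ?_⟩, ⟨⟨Set.univ, 0, fun a _ => trivial⟩, ?_⟩, ?_, ?_⟩
    · rintro B C ⟨m, hm⟩ hBC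
      exact ⟨m, fun a ha => hBC (hm ha)⟩
    · rintro B C ⟨m1, h1⟩ ⟨m2, h2⟩
      exact ⟨max m1 m2, fun a ha =>
        ⟨h1 (FS_antitone (le_max_left m1 m2) ha), h2 (FS_antitone (le_max_right m1 m2) ha)⟩⟩
    · rintro ⟨m, hm⟩
      exact hm (xmem m)
    · -- idempotent
      rintro B ⟨m, hm⟩
      refine ⟨m, fun n hn => ?_⟩
      obtain ⟨F, hFne, hFlb, hFs⟩ := hn
      refine ⟨F.max' hFne + 1, fun s hs => ?_⟩
      obtain ⟨G, hGne, hGlb, hGs⟩ := hs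
      have hdisj : Disjoint G F := by
        rw [Finset.disjoint_left]
        intro i hiG hiF
        have h1 := hGlb i hiG
        have h2 := Finset.le_max' F i hiF
        omega
      refine hm ⟨G ∪ F, hGne.mono Finset.subset_union_left, ?_, ?_⟩
      · intro i hi
        rcases Finset.mem_union.1 hi with h | h
        · have h1 := hGlb i h
          have h2 : m ≤ F.max' hFne := hFlb _ (F.max'_mem hFne)
          omega
        · exact hFlb i h
      · push_cast
        rw [hGs, hFs, Finset.sum_union hdisj]
    · -- A is in the filter
      refine ⟨0, fun a ha => ?_⟩
      obtain ⟨F, hFne, _, hFs⟩ := ha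
      obtain ⟨a', ha'A, ha's⟩ := hx F hFne
      have : a = a' := by
        apply PNat.coe_injective
        rw [hFs, ha's]
      exact this ▸ ha'A
  · -- backward: member of a proper idempotent filter is IP
    rintro ⟨F, hFil, hProp, hIdem, hA⟩
    choose xf Bf hx1 hx2 hx3 hx4 using galvin_step hFil hProp hIdem
    set Bseq : ℕ → {S : Set ℕ+ // S ∈ F} :=
      fun n => Nat.rec ⟨A, hA⟩ (fun _ p => ⟨Bf p, hx2 p⟩) n with hBseq
    set x : ℕ → ℕ+ := fun n => xf (Bseq n) with hxdef
    have hsucc : ∀ n, (Bseq (n + 1)).1 = Bf (Bseq n) := fun n => rfl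
    have hmono : ∀ {i j : ℕ}, i ≤ j → (Bseq j).1 ⊆ (Bseq i).1 := by
      intro i j hij
      induction j with
      | zero => simp_all
      | succ j ih =>
        rcases Nat.lt_or_ge i (j + 1) with h | h
        · exact fun a ha => ih (Nat.lt_succ_iff.1 h) (hx3 (Bseq j) ha)
        · have : i = j + 1 := le_antisymm hij h
          subst this; exact fun a ha => ha
    have key : ∀ k (G : Finset ℕ) (h : G.Nonempty), G.card ≤ k →
        ∃ a : ℕ+, (a : ℕ) = ∑ i ∈ G, (x i : ℕ) ∧ a ∈ (Bseq (G.min' h)).1 := by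
      intro k
      induction k with
      | zero =>
        intro G h hc
        have := h.card_pos
        omega
      | succ k ih =>
        intro G h hc
        set m := G.min' h with hm
        by_cases hsing : G = {m}
        · refine ⟨x m, by simp [hsing], hx1 (Bseq m)⟩
        · have hmem : m ∈ G := G.min'_mem h
          have hcard : 1 < G.card := by
            rcases Nat.lt_or_ge 1 G.card with h1 | h1
            · exact h1
            · exfalso
              apply hsing
              have : G.card = 1 := le_antisymm h1 h.card_pos
              obtain ⟨c, hc'⟩ := Finset.card_eq_one.1 this
              rw [hc'] at hmem ⊢
              simp at hmem
              rw [hmem]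
          have hne' : (G.erase m).Nonempty := by
            obtain ⟨b, hbG, hbm⟩ := Finset.exists_mem_ne hcard m
            exact ⟨b, Finset.mem_erase.2 ⟨hbm, hbG⟩⟩
          obtain ⟨a', ha's, ha'm⟩ := ih (G.erase m) hne' (by
            have := Finset.card_erase_of_mem hmem; omega)
          have hgt : m + 1 ≤ (G.erase m).min' hne' := by
            have h1 : (G.erase m).min' hne' ∈ G.erase m := Finset.min'_mem _ _
            have h2 : (G.erase m).min' hne' ∈ G := Finset.mem_of_mem_erase h1
            have h3 : (G.erase m).min' hne' ≠ m := (Finset.mem_erase.1 h1).1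
            have h4 : m ≤ (G.erase m).min' hne' := G.min'_le _ h2
            omega
          have ha'B : a' ∈ (Bseq (m + 1)).1 := hmono hgt ha'm
          have ha'B' : a' ∈ Bf (Bseq m) := by rw [← hsucc m]; exact ha'B
          refine ⟨a' + x m, ?_, hx4 (Bseq m) a' ha'B'⟩
          push_cast
          rw [ha's, ← Finset.add_sum_erase G _ hmem]
          ring
    refine ⟨x, fun G hG => ?_⟩
    obtain ⟨a, has, ham⟩ := key G.card G hG le_rfl
    exact ⟨a, hmono (Nat.zero_le _) ham, has⟩
end

section
/- The family 𝒫𝒮* of thickly syndetic sets (the dual of the family of piecewise syndetic sets) is a syndetic, translation-invariant filter, and every syndetic, translation-invariant filter on ℕ is contained in 𝒫𝒮*. -/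
open Set

/-- The dual family `𝒫𝒮*` of the family of piecewise syndetic sets: the thickly syndetic
sets. -/
def PSstar : Set (Set ℕ+) :=
  {A : Set ℕ+ | ∀ B : Set ℕ+, PiecewiseSyndetic B → (A ∩ B).Nonempty}

/-- A family is translation invariant if it is closed under the shifts `A ↦ A − n`. -/
def TranslationInvariant (F : Set (Set ℕ+)) : Prop :=
  ∀ A ∈ F, ∀ n : ℕ+, shiftN A n ∈ F

lemma mem_unionShifts {A : Set ℕ+} {N x : ℕ+} :
    x ∈ A ∪ ⋃ k ∈ {k : ℕ+ | k ≤ N}, shiftN A k ↔ x ∈ A ∨ ∃ k ≤ N, x + k ∈ A := by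
  simp [shiftN]

lemma thick_mono {A B : Set ℕ+} (h : A ⊆ B) (hA : Thick A) : Thick B := by
  intro F
  obtain ⟨n, hn⟩ := hA F
  exact ⟨n, fun f hf => h (hn f hf)⟩

lemma unionShifts_mono {A B : Set ℕ+} (h : A ⊆ B) (N : ℕ+) :
    (A ∪ ⋃ k ∈ {k : ℕ+ | k ≤ N}, shiftN A k) ⊆ B ∪ ⋃ k ∈ {k : ℕ+ | k ≤ N}, shiftN B k := by
  intro x hx
  rw [mem_unionShifts] at hx ⊢
  rcases hx with h1 | ⟨k, hk, hk2⟩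
  · exact Or.inl (h h1)
  · exact Or.inr ⟨k, hk, h hk2⟩

lemma ps_mono {A B : Set ℕ+} (h : A ⊆ B) (hA : PiecewiseSyndetic A) : PiecewiseSyndetic B := by
  obtain ⟨N, hN⟩ := hA
  exact ⟨N, thick_mono (unionShifts_mono h N) hN⟩

lemma thick_ps {A : Set ℕ+} (h : Thick A) : PiecewiseSyndetic A :=
  ⟨1, thick_mono Set.subset_union_left h⟩

/-- Partition regularity of piecewise syndeticity (two cells). -/
lemma ps_partition {A B : Set ℕ+} (h : PiecewiseSyndetic (A ∪ B)) :
    PiecewiseSyndetic A ∨ PiecewiseSyndetic B := by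
  by_contra hc
  push_neg at hc
  obtain ⟨hA, hB⟩ := hc
  obtain ⟨N, hN⟩ := h
  -- B with window N is not thick
  have hBnt : ¬ Thick (B ∪ ⋃ k ∈ {k : ℕ+ | k ≤ N}, shiftN B k) := fun ht => hB ⟨N, ht⟩
  rw [Thick] at hBnt
  push_neg at hBnt
  obtain ⟨G, hG⟩ := hBnt
  -- G is nonempty
  have hGne : G.Nonempty := by
    obtain ⟨g, hg, _⟩ := hG 1
    exact ⟨g, hg⟩
  set K : ℕ+ := G.sup id + N with hK
  apply hA
  refine ⟨K, ?_⟩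
  intro F
  -- apply thickness of the (A ∪ B)-window to {f + g : f ∈ F, g ∈ G}
  obtain ⟨n, hn⟩ := hN ((F ×ˢ G).image fun p => p.1 + p.2)
  refine ⟨n, fun f hf => ?_⟩
  obtain ⟨g, hg, hgB⟩ := hG (f + n)
  rw [mem_unionShifts] at hgB
  push_neg at hgB
  have hgK : g ≤ K := by rw [hK]; exact le_trans (Finset.le_sup (f := id) hg) (le_of_lt (PNat.lt_add_right _ _))
  have hfg : f + g + n ∈ (A ∪ B) ∪ ⋃ k ∈ {k : ℕ+ | k ≤ N}, shiftN (A ∪ B) k := by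
    apply hn
    exact Finset.mem_image.mpr ⟨(f, g), Finset.mem_product.mpr ⟨hf, hg⟩, rfl⟩
  rw [mem_unionShifts] at hfg
  rw [mem_unionShifts]
  rcases hfg with h1 | ⟨k, hk, hk2⟩
  · rcases h1 with h1 | h1
    · exact Or.inr ⟨g, hgK, by rwa [show f + g + n = f + n + g by ring] at h1⟩
    · exact absurd (by rwa [show f + g + n = g + (f + n) by ring] at h1) hgB.1
  · rcases hk2 with h2 | h2
    · refine Or.inr ⟨g + k, ?_, by rwa [show f + g + n + k = f + n + (g + k) by ring] at h2⟩
      rw [hK]; exact add_le_add (Finset.le_sup (f := id) hg) hk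
    · exact absurd (by rwa [show f + g + n + k = g + (f + n) + k by ring] at h2) (hgB.2 k hk)

lemma filter_inter_shifts {F : Set (Set ℕ+)} (hfil : IsFilterFamily F)
    (hti : TranslationInvariant F) {A : Set ℕ+} (hA : A ∈ F) (s : Finset ℕ+) :
    A ∩ ⋂ k ∈ s, shiftN A k ∈ F := by
  classical
  induction s using Finset.induction_on with
  | empty => exact hfil.1 hA (by simp)
  | @insert a s ha ih =>
    have h1 : shiftN A a ∩ (A ∩ ⋂ k ∈ s, shiftN A k) ∈ F := hfil.2 (hti A hA a) ih
    apply hfil.1 h1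
    intro x hx
    simp only [Set.mem_inter_iff, Set.mem_iInter] at hx ⊢
    refine ⟨hx.2.1, ?_⟩
    intro k hk
    rcases Finset.mem_insert.mp hk with rfl | hk
    · exact hx.1
    · exact hx.2.2 k hk

/-- The family `𝒫𝒮*` of thickly syndetic sets is a syndetic, translation-invariant filter,
and every syndetic, translation-invariant filter is contained in `𝒫𝒮*`. -/
theorem PSstar_largest_syndetic_translationInvariant_filter :
    (IsFilterFamily PSstar ∧ SyndeticFamily PSstar ∧ TranslationInvariant PSstar) ∧
    (∀ 𝓕 : Set (Set ℕ+), IsFilterFamily 𝓕 → SyndeticFamily 𝓕 →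
      TranslationInvariant 𝓕 → 𝓕 ⊆ PSstar) := by
  constructor
  · refine ⟨⟨?_, ?_⟩, ?_, ?_⟩
    · -- upward closed
      intro A B hA hAB C hC
      obtain ⟨x, hx1, hx2⟩ := hA C hC
      exact ⟨x, hAB hx1, hx2⟩
    · -- binary intersection
      intro A B hA hB C hC
      by_contra hne
      rw [Set.not_nonempty_iff_eq_empty] at hne
      have hsub : C ⊆ Aᶜ ∪ Bᶜ := by
        intro x hx
        by_contra hx2
        simp only [Set.mem_union, Set.mem_compl_iff, not_or, not_not] at hx2
        have : x ∈ A ∩ B ∩ C := ⟨⟨hx2.1, hx2.2⟩, hx⟩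
        rw [hne] at this
        exact this
      rcases ps_partition (ps_mono hsub hC) with h | h
      · obtain ⟨x, hx1, hx2⟩ := hA Aᶜ h; exact hx2 hx1
      · obtain ⟨x, hx1, hx2⟩ := hB Bᶜ h; exact hx2 hx1
    · -- syndetic
      intro A hA
      by_contra hsyn
      rw [Syndetic] at hsyn; push_neg at hsyn
      have hthick : Thick Aᶜ := by
        intro F
        rcases F.eq_empty_or_nonempty with rfl | hFne
        · exact ⟨1, by simp⟩
        · obtain ⟨m, hm⟩ := Set.ne_univ_iff_exists_notMem _ |>.mp (hsyn (F.sup id))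
          rw [mem_unionShifts] at hm
          push_neg at hm
          refine ⟨m, fun f hf => ?_⟩
          rw [Set.mem_compl_iff, add_comm]
          exact hm.2 f (Finset.le_sup (f := id) hf)
      obtain ⟨x, hx1, hx2⟩ := hA Aᶜ (thick_ps hthick)
      exact hx2 hx1
    · -- translation invariant
      intro A hA n B hB
      have hBn : PiecewiseSyndetic ((fun m => m + n) '' B) := by
        obtain ⟨N, hN⟩ := hB
        refine ⟨N + n, thick_mono ?_ hN⟩
        intro x hx
        rw [mem_unionShifts] at hx
        rw [mem_unionShifts]
        rcases hx with h1 | ⟨k, hk, hk2⟩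
        · exact Or.inr ⟨n, le_of_lt (PNat.lt_add_left _ _), ⟨x, h1, rfl⟩⟩
        · exact Or.inr ⟨k + n, add_le_add hk le_rfl, ⟨x + k, hk2, by ring⟩⟩
      obtain ⟨x, hx1, hx2⟩ := hA _ hBn
      obtain ⟨m, hm, rfl⟩ := hx2
      exact ⟨m, hx1, hm⟩
  · -- maximality
    intro 𝓕 hfil hsyn hti A hA B hB
    obtain ⟨N, hN⟩ := hB
    have hC : A ∩ ⋂ k ∈ Finset.Icc 1 N, shiftN A k ∈ 𝓕 :=
      filter_inter_shifts hfil hti hA _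
    set C := A ∩ ⋂ k ∈ Finset.Icc 1 N, shiftN A k with hCdef
    obtain ⟨M, hM⟩ := hsyn C hC
    obtain ⟨n, hn⟩ := hN (insert (1 : ℕ+) ((Finset.Icc 1 M).image fun j => 1 + j))
    -- find y ∈ C with y = f + n for some f in our finset
    have key : ∃ y : ℕ+, y ∈ C ∧ y ∈ B ∪ ⋃ k ∈ {k : ℕ+ | k ≤ N}, shiftN B k := by
      have hx : (1 + n : ℕ+) ∈ C ∪ ⋃ k ∈ {k : ℕ+ | k ≤ M}, shiftN C k := by
        rw [hM]; trivial
      rw [mem_unionShifts] at hx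
      rcases hx with h1 | ⟨j, hj, hj2⟩
      · exact ⟨1 + n, h1, hn 1 (Finset.mem_insert_self _ _)⟩
      · refine ⟨1 + n + j, hj2, ?_⟩
        have : (1 + j) + n ∈ B ∪ ⋃ k ∈ {k : ℕ+ | k ≤ N}, shiftN B k := by
          apply hn
          exact Finset.mem_insert_of_mem (Finset.mem_image.mpr ⟨j, by simp [hj], rfl⟩)
        rwa [show (1 + j) + n = 1 + n + j by ring] at this
    obtain ⟨y, hyC, hyB⟩ := key
    rw [mem_unionShifts] at hyB
    have hyA : y ∈ A := hyC.1
    rcases hyB with h1 | ⟨k, hk, hk2⟩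
    · exact ⟨y, hyA, h1⟩
    · refine ⟨y + k, ?_, hk2⟩
      have := hyC.2
      simp only [Set.mem_iInter] at this
      exact this k (Finset.mem_Icc.mpr ⟨k.one_le, hk⟩)
end

section
/- Let (Z_i, R_i), i ∈ ℕ, be a disjoint collection of minimal topological dynamical systems. Then for every minimal system (X, T) and every ε > 0, there exists I ∈ ℕ such that for all i ≥ I and every joining J of (X, T) and (Z_i, R_i), the following holds: for every z ∈ Z_i, the set {x ∈ X | (x, z) ∈ J} is ε-dense in X. -/
open Set

lemma surj_of_minimalMap {Y : Type*} [MetricSpace Y] [CompactSpace Y] [Nonempty Y]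
    {f : Y → Y} (hc : Continuous f) (hm : ∀ y : Y, Dense (Set.range fun n : ℕ+ => f^[(n : ℕ)] y)) :
    Function.Surjective f := by
  have y0 : Y := Classical.arbitrary Y
  have hcl : IsClosed (Set.range f) := (isCompact_range hc).isClosed
  have hsub : Set.range (fun n : ℕ+ => f^[(n : ℕ)] y0) ⊆ Set.range f := by
    rintro _ ⟨n, rfl⟩
    obtain ⟨k, hk⟩ : ∃ k, (n : ℕ) = k + 1 := ⟨(n : ℕ) - 1, by have := n.pos; omega⟩
    show f^[(n:ℕ)] y0 ∈ Set.range f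
    rw [hk, Function.iterate_succ_apply']
    exact ⟨_, rfl⟩
  have huniv : Set.range f = Set.univ := by
    apply Set.eq_univ_of_univ_subset
    calc (Set.univ : Set Y) = closure (Set.range fun n : ℕ+ => f^[(n : ℕ)] y0) :=
          ((hm y0).closure_eq).symm
      _ ⊆ closure (Set.range f) := closure_mono hsub
      _ = Set.range f := hcl.closure_eq
  intro y
  have : y ∈ Set.range f := huniv ▸ Set.mem_univ y
  exact this

lemma iterate_mem_joining {X Z : Type*} {T : X → X} {R : Z → Z} {J : Set (X × Z)}
    (h : ∀ q ∈ J, (T q.1, R q.2) ∈ J) (n : ℕ) :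
    ∀ x z, (x, z) ∈ J → (T^[n] x, R^[n] z) ∈ J := by
  induction n with
  | zero => intro x z hx; simpa using hx
  | succ n ih =>
    intro x z hx
    rw [Function.iterate_succ_apply', Function.iterate_succ_apply']
    exact h (T^[n] x, R^[n] z) (ih x z hx)

lemma exists_finset_card_of_unbounded {P : ℕ+ → Prop}
    (h : ∀ I : ℕ+, ∃ i, I ≤ i ∧ P i) (k : ℕ) :
    ∃ F : Finset ℕ+, F.card = k ∧ ∀ j ∈ F, P j := by
  induction k with
  | zero => exact ⟨∅, rfl, by simp⟩
  | succ k ih =>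
    obtain ⟨F, hcard, hF⟩ := ih
    obtain ⟨i, hi, hPi⟩ := h (F.sup id + 1)
    have hnot : i ∉ F := by
      intro hmem
      have h1 : i ≤ F.sup id := Finset.le_sup (f := id) hmem
      have h2 : F.sup id < F.sup id + 1 := PNat.lt_add_right _ _
      exact absurd (le_trans hi h1) (not_le.2 h2)
    exact ⟨insert i F, by rw [Finset.card_insert_of_notMem hnot, hcard],
      by intro j hj
         rcases Finset.mem_insert.1 hj with rfl | hj
         exacts [hPi, hF j hj]⟩

lemma relprod_proj_univ {ι : Type} [Fintype ι] {Z : ι → Type}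
    [∀ i, MetricSpace (Z i)] [∀ i, CompactSpace (Z i)]
    {X : Type} [MetricSpace X] [CompactSpace X] [Nonempty X]
    (T : X → X) (R : ∀ i, Z i → Z i)
    (hmin : MinimalMap (fun z : (∀ i, Z i) => fun i => R i (z i)))
    (J : ∀ i, Set (X × Z i)) (hcl : ∀ i, IsClosed (J i))
    (hinv : ∀ i, ∀ q ∈ J i, (T q.1, R i q.2) ∈ J i)
    (hfst : ∀ i, Prod.fst '' J i = Set.univ) :
    ∀ z : ∀ i, Z i, ∃ x : X, ∀ i, (x, z i) ∈ J i := by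
  set S : (∀ i, Z i) → (∀ i, Z i) := fun z => fun i => R i (z i) with hS
  set W : Set (X × ∀ i, Z i) := {q | ∀ i, (q.1, q.2 i) ∈ J i} with hWdef
  have hWclosed : IsClosed W := by
    have : W = ⋂ i, (fun q : X × (∀ i, Z i) => (q.1, q.2 i)) ⁻¹' (J i) := by
      ext q; simp [hWdef, Set.mem_iInter]
    rw [this]
    exact isClosed_iInter fun i =>
      (hcl i).preimage (continuous_fst.prodMk ((continuous_apply i).comp continuous_snd))
  have hWne : W.Nonempty := by
    have x0 : X := Classical.arbitrary X
    have hζ : ∀ i, ∃ z : Z i, (x0, z) ∈ J i := by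
      intro i
      have : x0 ∈ Prod.fst '' (J i) := (hfst i).symm ▸ Set.mem_univ x0
      obtain ⟨q, hq, hq1⟩ := this
      exact ⟨q.2, by rwa [← hq1]⟩
    choose ζ hζmem using hζ
    exact ⟨(x0, ζ), hζmem⟩
  set πW : Set (∀ i, Z i) := Prod.snd '' W with hπWdef
  have hWcpt : IsCompact W := hWclosed.isCompact
  have hπcl : IsClosed πW := (hWcpt.image continuous_snd).isClosed
  have hπinv : ∀ ω ∈ πW, S ω ∈ πW := by
    rintro ω ⟨q, hq, rfl⟩
    exact ⟨(T q.1, S q.2), fun i => hinv i (q.1, q.2 i) (hq i), rfl⟩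
  have hπiter : ∀ (n : ℕ) (ω : ∀ i, Z i), ω ∈ πW → S^[n] ω ∈ πW := by
    intro n
    induction n with
    | zero => intro ω hω; simpa using hω
    | succ n ih =>
      intro ω hω
      rw [Function.iterate_succ_apply']
      exact hπinv _ (ih ω hω)
  have hπuniv : ∀ ω : ∀ i, Z i, ω ∈ πW := by
    obtain ⟨ω0, hω0⟩ : πW.Nonempty := hWne.image _
    intro ω
    have hd : Dense (Set.range fun n : ℕ+ => S^[(n : ℕ)] ω0) := hmin ω0
    have hsub : (Set.range fun n : ℕ+ => S^[(n : ℕ)] ω0) ⊆ πW := by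
      rintro _ ⟨n, rfl⟩
      exact hπiter (n : ℕ) ω0 hω0
    have : ω ∈ closure πW := closure_mono hsub (hd ω)
    rwa [hπcl.closure_eq] at this
  intro z
  obtain ⟨q, hqW, hq2⟩ := hπuniv z
  refine ⟨q.1, fun i => ?_⟩
  have := hqW i
  rwa [hq2] at this

/-- **Theorem (Bessel-type disjointness).** Let `(Z i, R i)`, `i ∈ ℕ`, be a disjoint
collection of minimal systems (every finite product is minimal).  For every minimal system
`(X, T)` and every `ε > 0`, there is an index `I` such that for all `i ≥ I` and every
joining `J` of `(X, T)` and `(Z i, R i)` (a nonempty closed invariant subset of the product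
with full projections), for every `z : Z i`, the slice `{x | (x, z) ∈ J}` is `ε`-dense. -/
theorem joinings_eventually_dense_fibers
    (Z : ℕ+ → Type) [∀ i, MetricSpace (Z i)] [∀ i, CompactSpace (Z i)]
    [∀ i, Nonempty (Z i)]
    (R : ∀ i, Z i → Z i) (hRc : ∀ i, Continuous (R i)) (hRmin : ∀ i, MinimalMap (R i))
    (hdisj : ∀ I : Finset ℕ+, I.Nonempty →
      MinimalMap (fun z : (∀ i : {j : ℕ+ // j ∈ I}, Z i.1) => fun i => R i.1 (z i)))
    (X : Type) [MetricSpace X] [CompactSpace X] [Nonempty X]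
    (T : X → X) (hTc : Continuous T) (hTmin : MinimalMap T)
    (ε : ℝ) (hε : 0 < ε) :
    ∃ I : ℕ+, ∀ i : ℕ+, I ≤ i →
      ∀ J : Set (X × Z i),
        J.Nonempty → IsClosed J →
        (∀ q ∈ J, (T q.1, R i q.2) ∈ J) →
        Prod.fst '' J = Set.univ → Prod.snd '' J = Set.univ →
        ∀ z : Z i, ∀ x : X, ∃ x' : X, (x', z) ∈ J ∧ dist x x' ≤ ε := by
  -- Step 1: for each `c a : X` choose a time `m` and radius `δ` such that `T^[m]`
  -- maps the `δ`-ball around `c` into the `ε/2`-ball around `a`.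
  have key : ∀ c a : X, ∃ (m : ℕ+) (δ : ℝ), 0 < δ ∧
      ∀ x : X, dist x c < δ → dist a (T^[(m : ℕ)] x) < ε / 2 := by
    intro c a
    obtain ⟨y, ⟨m, rfl⟩, hy⟩ := (hTmin c).exists_dist_lt a (by positivity : (0:ℝ) < ε / 4)
    have hct : ContinuousAt (T^[(m : ℕ)]) c := (hTc.iterate _).continuousAt
    rw [Metric.continuousAt_iff] at hct
    obtain ⟨δ, hδ0, hδ⟩ := hct (ε / 4) (by positivity)
    refine ⟨m, δ, hδ0, fun x hx => ?_⟩
    have h1 := hδ hx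
    calc dist a (T^[(m : ℕ)] x) ≤ dist a (T^[(m : ℕ)] c) + dist (T^[(m : ℕ)] c) (T^[(m : ℕ)] x) :=
          dist_triangle _ _ _
      _ < ε / 4 + ε / 4 := by
          rw [dist_comm (T^[(m : ℕ)] c)]
          exact add_lt_add hy h1
      _ = ε / 2 := by ring
  choose mf δf hδ0 hδ using key
  -- Step 2: a finite `ε/2`-net `t`.
  obtain ⟨t, ht⟩ := isCompact_univ.elim_finite_subcover (fun a : X => Metric.ball a (ε / 2))
    (fun _ => Metric.isOpen_ball)
    (fun x _ => Set.mem_iUnion.2 ⟨x, Metric.mem_ball_self (by positivity)⟩)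
  have htne : t.Nonempty := by
    obtain ⟨a, ha, -⟩ := Set.mem_iUnion₂.1 (ht (Set.mem_univ (Classical.arbitrary X)))
    exact ⟨a, ha⟩
  -- Step 3: the minimal radius function and a finite cover `s` by such balls.
  set δmin : X → ℝ := fun c => t.inf' htne (fun a => δf c a) with hδmin_def
  have hδmin0 : ∀ c, 0 < δmin c := fun c =>
    (Finset.lt_inf'_iff htne).2 fun a _ => hδ0 c a
  have hδminle : ∀ c a, a ∈ t → δmin c ≤ δf c a := fun c a ha => Finset.inf'_le _ ha
  obtain ⟨s, hs⟩ := isCompact_univ.elim_finite_subcover (fun c : X => Metric.ball c (δmin c))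
    (fun _ => Metric.isOpen_ball)
    (fun x _ => Set.mem_iUnion.2 ⟨x, Metric.mem_ball_self (hδmin0 x)⟩)
  have hsne : s.Nonempty := by
    obtain ⟨c, hc, -⟩ := Set.mem_iUnion₂.1 (hs (Set.mem_univ (Classical.arbitrary X)))
    exact ⟨c, hc⟩
  -- Step 4: suppose no such `I` exists; get unboundedly many bad indices.
  by_contra hcon
  push_neg at hcon
  have hcon' : ∀ I : ℕ+, ∃ i, I ≤ i ∧ ∃ (J : Set (X × Z i)) (z : Z i) (x : X),
      J.Nonempty ∧ IsClosed J ∧ (∀ q ∈ J, (T q.1, R i q.2) ∈ J) ∧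
      Prod.fst '' J = Set.univ ∧ Prod.snd '' J = Set.univ ∧
      ∀ x' : X, (x', z) ∈ J → ε < dist x x' := by
    intro I
    obtain ⟨i, hi, J, h1, h2, h3, h4, h5, z, x, h6⟩ := hcon I
    exact ⟨i, hi, J, z, x, h1, h2, h3, h4, h5, h6⟩
  -- a finset of bad indices of cardinality `s.card`
  obtain ⟨I', hcard, hIbad⟩ := exists_finset_card_of_unbounded hcon' s.card
  have hne' : I'.Nonempty := Finset.card_pos.1 (hcard ▸ Finset.card_pos.2 hsne)
  -- identify the bad indices with the centers of the cover `s`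
  let e : {j : ℕ+ // j ∈ I'} ≃ {c : X // c ∈ s} :=
    (Finset.equivFinOfCardEq hcard).trans s.equivFin.symm
  -- extract the bad joinings and witnesses
  have hBad := fun ρ : {j : ℕ+ // j ∈ I'} => hIbad ρ.1 ρ.2
  choose Jf zf xf hJne hJcl hJinv hJ1 hJ2 havoid using hBad
  -- each bad center lies in some ball of the `ε/2`-net
  have hxt : ∀ ρ : {j : ℕ+ // j ∈ I'}, ∃ a, a ∈ t ∧ dist (xf ρ) a < ε / 2 := by
    intro ρ
    obtain ⟨a, ha, hmem⟩ := Set.mem_iUnion₂.1 (ht (Set.mem_univ (xf ρ)))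
    exact ⟨a, ha, Metric.mem_ball.1 hmem⟩
  choose af haft hafd using hxt
  -- transported bad points
  have hRsurj : ∀ (i : ℕ+) (m : ℕ), Function.Surjective ((R i)^[m]) := fun i m =>
    (surj_of_minimalMap (hRc i) (hRmin i)).iterate m
  have hz' : ∀ ρ : {j : ℕ+ // j ∈ I'}, ∃ z' : Z ρ.1,
      (R ρ.1)^[((mf ((e ρ : {c : X // c ∈ s}) : X) (af ρ) : ℕ+) : ℕ)] z' = zf ρ := fun ρ =>
    hRsurj _ _ _
  choose z'f hz'f using hz'
  -- the transported avoidance property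
  have hav2 : ∀ ρ : {j : ℕ+ // j ∈ I'}, ∀ x' : X, (x', z'f ρ) ∈ Jf ρ →
      x' ∉ Metric.ball ((e ρ : {c : X // c ∈ s}) : X) (δmin ((e ρ : {c : X // c ∈ s}) : X)) := by
    intro ρ x' hx' hball
    set c : X := ((e ρ : {c : X // c ∈ s}) : X) with hc
    set a : X := af ρ with ha
    set m : ℕ+ := mf c a with hm
    have h1 : dist x' c < δf c a :=
      lt_of_lt_of_le (Metric.mem_ball.1 hball) (hδminle c a (haft ρ))
    have h2 : dist a (T^[(m : ℕ)] x') < ε / 2 := hδ c a x' h1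
    have h3 : (T^[(m : ℕ)] x', (R ρ.1)^[(m : ℕ)] (z'f ρ)) ∈ Jf ρ :=
      iterate_mem_joining (hJinv ρ) (m : ℕ) x' (z'f ρ) hx'
    rw [hz'f ρ] at h3
    have h4 := havoid ρ (T^[(m : ℕ)] x') h3
    have h5 : dist (xf ρ) (T^[(m : ℕ)] x') ≤ dist (xf ρ) a + dist a (T^[(m : ℕ)] x') :=
      dist_triangle _ _ _
    have h6 := hafd ρ
    linarith
  -- apply the relative-product/disjointness lemma
  obtain ⟨x, hx⟩ := relprod_proj_univ (Z := fun ρ : {j : ℕ+ // j ∈ I'} => Z ρ.1)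
    T (fun ρ => R ρ.1) (hdisj I' hne') Jf hJcl hJinv hJ1 (fun ρ => z'f ρ)
  obtain ⟨c, hcs, hcball⟩ := Set.mem_iUnion₂.1 (hs (Set.mem_univ x))
  have hnot : x ∉ Metric.ball ((e (e.symm ⟨c, hcs⟩) : {c : X // c ∈ s}) : X)
      (δmin ((e (e.symm ⟨c, hcs⟩) : {c : X // c ∈ s}) : X)) :=
    hav2 (e.symm ⟨c, hcs⟩) x (hx _)
  rw [e.apply_symm_apply] at hnot
  exact hnot hcball
end
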